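/- (Deterministic bound on ‖P_T(A_r − B)‖_F, second half of Theorem 1.) Let λ > 0, ε ≥ 0, β > 1, n ≥ 5, and let Ω be a finite multiset of s index pairs from [m]×[n]. Let A_r ∈ ℝ^{m×n} satisfy P_T(A_r) = A_r, and let B ∈ ℝ^{m×n}. Set Γ = 2 s ε²/(m n) + 3 m n r log(2n) λ²/(8s). Assume: (i) (1/2)·⟨R_Ω(A_r − B), A_r − B⟩ + (λ/2)·‖P_{T⊥}(B)‖_* ≤ λ·√(r/(2n))·‖P_T(A_r − B)‖_F + Γ; (ii) the linear map (mn/s)·P_T∘R_Ω∘P_T − P_T on ℝ^{m×n} has operator norm at most 1/2 with respect to the Frobenius norm; (iii) R_Ω has operator norm at most (8/3)·√β·log(n) with respect to the Frobenius norm. Then ‖P_T(A_r − B)‖_F ≤ 4ε + (2 m n λ/s)·√(3 r log(2n)) + 64 log(n)·√(m n β/(6 s))·‖P_{T⊥}(B)‖_F. -/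

import Mathlib

open scoped BigOperators
open Matrix
open MeasureTheory

/-- Restored helper (removed from Mathlib): `Aᵀ * A` is Hermitian over a ring with trivial star. -/
theorem Matrix.isHermitian_transpose_mul_self {m n α : Type*} [Fintype m] [NonUnitalCommSemiring α]
    [StarRing α] [TrivialStar α] (A : Matrix m n α) : (Aᵀ * A).IsHermitian := by
  rw [Matrix.IsHermitian, Matrix.conjTranspose_eq_transpose_of_trivial, Matrix.transpose_mul,
    Matrix.transpose_transpose]

namespace MC

variable {m n r s : ℕ}

/-- Trace inner product `⟨X,Y⟩ = trace(Xᵀ Y)`. -/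
def ip (A B : Matrix (Fin m) (Fin n) ℝ) : ℝ := ∑ i, ∑ j, A i j * B i j

/-- Frobenius norm. -/
noncomputable def fro (A : Matrix (Fin m) (Fin n) ℝ) : ℝ := Real.sqrt (ip A A)

/-- Largest absolute value of an entry. -/
noncomputable def infNorm (A : Matrix (Fin m) (Fin n) ℝ) : ℝ := ⨆ i, ⨆ j, |A i j|

/-- Nuclear norm: sum of singular values. -/
noncomputable def nuclearNorm (A : Matrix (Fin m) (Fin n) ℝ) : ℝ :=
  ∑ j, Real.sqrt ((Matrix.isHermitian_transpose_mul_self A).eigenvalues j)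

/-- Spectral norm: largest singular value. -/
noncomputable def specNorm (A : Matrix (Fin m) (Fin n) ℝ) : ℝ :=
  ⨆ j, Real.sqrt ((Matrix.isHermitian_transpose_mul_self A).eigenvalues j)

/-- Sampling operator for a multiset of index pairs. -/
def RΩ (Ω : Multiset (Fin m × Fin n)) (Z : Matrix (Fin m) (Fin n) ℝ) :
    Matrix (Fin m) (Fin n) ℝ :=
  Matrix.of fun i j => (Ω.count (i, j)) * Z i j

def PT (U : Matrix (Fin m) (Fin r) ℝ) (V : Matrix (Fin n) (Fin r) ℝ)
    (Z : Matrix (Fin m) (Fin n) ℝ) : Matrix (Fin m) (Fin n) ℝ :=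
  U * Uᵀ * Z + Z * (V * Vᵀ) - U * Uᵀ * Z * (V * Vᵀ)

def PTperp (U : Matrix (Fin m) (Fin r) ℝ) (V : Matrix (Fin n) (Fin r) ℝ)
    (Z : Matrix (Fin m) (Fin n) ℝ) : Matrix (Fin m) (Fin n) ℝ :=
  (1 - U * Uᵀ) * Z * (1 - V * Vᵀ)

/-- Objective of nuclear-norm regularized least squares. -/
noncomputable def obj (Ω : Multiset (Fin m × Fin n)) (A : Matrix (Fin m) (Fin n) ℝ)
    (lam : ℝ) (B : Matrix (Fin m) (Fin n) ℝ) : ℝ :=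
  (1 / 2) * (Ω.map fun p => (B p.1 p.2 - A p.1 p.2) ^ 2).sum + lam * nuclearNorm B

/-- Uniform probability measure on index pairs. -/
noncomputable def unifPair (m n : ℕ) : Measure (Fin m × Fin n) :=
  (Fintype.card (Fin m × Fin n) : ENNReal)⁻¹ • Measure.count

/-- Law of `s` i.i.d. uniform index pairs. -/
noncomputable def sampleMeasure (m n s : ℕ) : Measure (Fin s → Fin m × Fin n) :=
  Measure.pi fun _ => unifPair m n

/-- The multiset of sampled indices. -/
def toMS (ω : Fin s → Fin m × Fin n) : Multiset (Fin m × Fin n) :=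
  Multiset.map ω Finset.univ.val

/-! ### Auxiliary lemmas -/

lemma ip_eq_sum_prod (A B : Matrix (Fin m) (Fin n) ℝ) :
    ip A B = ∑ p : Fin m × Fin n, A p.1 p.2 * B p.1 p.2 := by
  rw [ip, Fintype.sum_prod_type]

lemma ip_comm (A B : Matrix (Fin m) (Fin n) ℝ) : ip A B = ip B A := by
  simp [ip, mul_comm]

lemma ip_add_left (A B C : Matrix (Fin m) (Fin n) ℝ) : ip (A + B) C = ip A C + ip B C := by
  simp [ip, Matrix.add_apply, add_mul, Finset.sum_add_distrib]

lemma ip_add_right (A B C : Matrix (Fin m) (Fin n) ℝ) : ip A (B + C) = ip A B + ip A C := by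
  rw [ip_comm, ip_add_left, ip_comm B A, ip_comm C A]

lemma ip_smul_left (c : ℝ) (A B : Matrix (Fin m) (Fin n) ℝ) : ip (c • A) B = c * ip A B := by
  simp [ip, Matrix.smul_apply, Finset.mul_sum, mul_assoc]

lemma ip_sub_left (A B C : Matrix (Fin m) (Fin n) ℝ) : ip (A - B) C = ip A C - ip B C := by
  simp [ip, Matrix.sub_apply, sub_mul, Finset.sum_sub_distrib]

lemma ip_neg_neg (A B : Matrix (Fin m) (Fin n) ℝ) : ip (-A) (-B) = ip A B := by
  simp [ip]

lemma ip_self_nonneg (A : Matrix (Fin m) (Fin n) ℝ) : 0 ≤ ip A A := by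
  apply Finset.sum_nonneg; intro i _
  apply Finset.sum_nonneg; intro j _
  exact mul_self_nonneg _

lemma fro_nonneg (A : Matrix (Fin m) (Fin n) ℝ) : 0 ≤ fro A := Real.sqrt_nonneg _

lemma fro_sq (A : Matrix (Fin m) (Fin n) ℝ) : fro A ^ 2 = ip A A :=
  Real.sq_sqrt (ip_self_nonneg A)

lemma fro_neg (A : Matrix (Fin m) (Fin n) ℝ) : fro (-A) = fro A := by
  rw [fro, fro, ip_neg_neg]

lemma abs_ip_le (A B : Matrix (Fin m) (Fin n) ℝ) : |ip A B| ≤ fro A * fro B := by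
  have h := Finset.sum_mul_sq_le_sq_mul_sq Finset.univ
    (fun p : Fin m × Fin n => A p.1 p.2) (fun p => B p.1 p.2)
  rw [← ip_eq_sum_prod] at h
  have hA : ∑ p : Fin m × Fin n, A p.1 p.2 ^ 2 = ip A A := by
    rw [ip_eq_sum_prod]; exact Finset.sum_congr rfl fun p _ => by ring
  have hB : ∑ p : Fin m × Fin n, B p.1 p.2 ^ 2 = ip B B := by
    rw [ip_eq_sum_prod]; exact Finset.sum_congr rfl fun p _ => by ring
  rw [hA, hB] at h
  calc |ip A B| = Real.sqrt ((ip A B) ^ 2) := (Real.sqrt_sq_eq_abs _).symm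
    _ ≤ Real.sqrt (ip A A * ip B B) := Real.sqrt_le_sqrt h
    _ = fro A * fro B := by rw [Real.sqrt_mul (ip_self_nonneg A), fro, fro]

lemma RΩ_add (Ω : Multiset (Fin m × Fin n)) (X Y : Matrix (Fin m) (Fin n) ℝ) :
    RΩ Ω (X + Y) = RΩ Ω X + RΩ Ω Y := by
  ext i j; simp [RΩ, mul_add]

lemma ip_RΩ_eq (Ω : Multiset (Fin m × Fin n)) (X Y : Matrix (Fin m) (Fin n) ℝ) :
    ip (RΩ Ω X) Y = ∑ p : Fin m × Fin n, (Ω.count p : ℝ) * (X p.1 p.2 * Y p.1 p.2) := by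
  rw [ip_eq_sum_prod]
  exact Finset.sum_congr rfl fun p _ => by simp [RΩ, mul_assoc]

lemma ip_RΩ_comm (Ω : Multiset (Fin m × Fin n)) (X Y : Matrix (Fin m) (Fin n) ℝ) :
    ip (RΩ Ω X) Y = ip (RΩ Ω Y) X := by
  rw [ip_RΩ_eq, ip_RΩ_eq]
  exact Finset.sum_congr rfl fun p _ => by ring

lemma ip_RΩ_self_nonneg (Ω : Multiset (Fin m × Fin n)) (X : Matrix (Fin m) (Fin n) ℝ) :
    0 ≤ ip (RΩ Ω X) X := by
  rw [ip_RΩ_eq]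
  apply Finset.sum_nonneg; intro p _
  exact mul_nonneg (Nat.cast_nonneg _) (mul_self_nonneg _)

lemma ip_RΩ_cs (Ω : Multiset (Fin m × Fin n)) (X Y : Matrix (Fin m) (Fin n) ℝ) :
    (ip (RΩ Ω X) Y) ^ 2 ≤ ip (RΩ Ω X) X * ip (RΩ Ω Y) Y := by
  have h := Finset.sum_mul_sq_le_sq_mul_sq Finset.univ
    (fun p : Fin m × Fin n => Real.sqrt (Ω.count p : ℝ) * X p.1 p.2)
    (fun p : Fin m × Fin n => Real.sqrt (Ω.count p : ℝ) * Y p.1 p.2)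
  have e1 : ∀ (p : Fin m × Fin n) (a b : ℝ), (Real.sqrt (Ω.count p : ℝ) * a) *
      (Real.sqrt (Ω.count p : ℝ) * b) = (Ω.count p : ℝ) * (a * b) := by
    intro p a b
    rw [mul_mul_mul_comm, Real.mul_self_sqrt (Nat.cast_nonneg _)]
  calc (ip (RΩ Ω X) Y) ^ 2
      = (∑ p : Fin m × Fin n, (Real.sqrt (Ω.count p : ℝ) * X p.1 p.2) *
          (Real.sqrt (Ω.count p : ℝ) * Y p.1 p.2)) ^ 2 := by
        rw [ip_RΩ_eq]; congr 1; exact Finset.sum_congr rfl fun p _ => (e1 p _ _).symm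
    _ ≤ (∑ p : Fin m × Fin n, (Real.sqrt (Ω.count p : ℝ) * X p.1 p.2) ^ 2) *
        (∑ p : Fin m × Fin n, (Real.sqrt (Ω.count p : ℝ) * Y p.1 p.2) ^ 2) := h
    _ = ip (RΩ Ω X) X * ip (RΩ Ω Y) Y := by
        rw [ip_RΩ_eq, ip_RΩ_eq]; congr 1 <;>
        · exact Finset.sum_congr rfl fun p _ => by rw [sq, e1 p]

lemma ip_eq_trace (A B : Matrix (Fin m) (Fin n) ℝ) : ip A B = Matrix.trace (Aᵀ * B) := by
  rw [ip, Matrix.trace, Finset.sum_comm]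
  apply Finset.sum_congr rfl
  intro j _
  simp [Matrix.diag, Matrix.mul_apply, Matrix.transpose_apply]

variable (U : Matrix (Fin m) (Fin r) ℝ) (V : Matrix (Fin n) (Fin r) ℝ)

lemma ip_mulP_left (A B : Matrix (Fin m) (Fin n) ℝ) :
    ip (U * Uᵀ * A) B = ip A (U * Uᵀ * B) := by
  rw [ip_eq_trace, ip_eq_trace, Matrix.transpose_mul, Matrix.transpose_mul,
    Matrix.transpose_transpose]
  simp [Matrix.mul_assoc]

lemma ip_mulQ_left (A B : Matrix (Fin m) (Fin n) ℝ) :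
    ip (A * (V * Vᵀ)) B = ip A (B * (V * Vᵀ)) := by
  rw [ip_eq_trace, ip_eq_trace, Matrix.transpose_mul, Matrix.transpose_mul,
    Matrix.transpose_transpose, Matrix.mul_assoc, Matrix.trace_mul_comm]
  rw [Matrix.mul_assoc, ← Matrix.mul_assoc]

lemma ip_PT_symm (A B : Matrix (Fin m) (Fin n) ℝ) :
    ip (PT U V A) B = ip A (PT U V B) := by
  have haddr : ∀ (C X Y : Matrix (Fin m) (Fin n) ℝ), ip C (X + Y) = ip C X + ip C Y := by
    intro C X Y; simp [ip, Matrix.add_apply, mul_add, Finset.sum_add_distrib]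
  have hsubr : ∀ (C X Y : Matrix (Fin m) (Fin n) ℝ), ip C (X - Y) = ip C X - ip C Y := by
    intro C X Y; simp [ip, Matrix.sub_apply, mul_sub, Finset.sum_sub_distrib]
  rw [PT, PT, ip_sub_left, ip_add_left, hsubr, haddr, ip_mulP_left, ip_mulQ_left]
  congr 1
  have h1 : U * Uᵀ * A * (V * Vᵀ) = U * Uᵀ * (A * (V * Vᵀ)) := by rw [Matrix.mul_assoc]
  have h2 : U * Uᵀ * B * (V * Vᵀ) = U * Uᵀ * (B * (V * Vᵀ)) := by rw [Matrix.mul_assoc]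
  rw [h1, h2, ip_mulP_left, ip_mulQ_left, Matrix.mul_assoc]

lemma PT_idem (hUo : Uᵀ * U = 1) (hVo : Vᵀ * V = 1) (Z : Matrix (Fin m) (Fin n) ℝ) :
    PT U V (PT U V Z) = PT U V Z := by
  have hP : (U * Uᵀ) * (U * Uᵀ) = U * Uᵀ := by
    rw [Matrix.mul_assoc, ← Matrix.mul_assoc Uᵀ U Uᵀ, hUo, Matrix.one_mul]
  have hQ : (V * Vᵀ) * (V * Vᵀ) = V * Vᵀ := by
    rw [Matrix.mul_assoc, ← Matrix.mul_assoc Vᵀ V Vᵀ, hVo, Matrix.one_mul]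
  set P := U * Uᵀ with hPdef
  set Q := V * Vᵀ with hQdef
  have hQr : ∀ W : Matrix (Fin m) (Fin n) ℝ, W * Q * Q = W * Q := by
    intro W; rw [Matrix.mul_assoc, hQ]
  show P * (P * Z + Z * Q - P * Z * Q) + (P * Z + Z * Q - P * Z * Q) * Q
      - P * (P * Z + Z * Q - P * Z * Q) * Q = P * Z + Z * Q - P * Z * Q
  simp only [Matrix.mul_add, Matrix.add_mul, Matrix.mul_sub, Matrix.sub_mul,
    ← Matrix.mul_assoc, hP, hQr]
  abel

lemma PTperp_eq (Z : Matrix (Fin m) (Fin n) ℝ) : PTperp U V Z = Z - PT U V Z := by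
  rw [PTperp, PT]
  simp only [Matrix.mul_sub, Matrix.sub_mul, Matrix.mul_add, Matrix.add_mul,
    Matrix.one_mul, Matrix.mul_one]
  abel

lemma PT_sub (X Y : Matrix (Fin m) (Fin n) ℝ) :
    PT U V (X - Y) = PT U V X - PT U V Y := by
  simp only [PT, Matrix.mul_sub, Matrix.sub_mul]
  abel

lemma le_of_sq_le' {a c : ℝ} (ha : 0 ≤ a) (hc : 0 ≤ c) (h : a^2 ≤ c^2) : a ≤ c := by
  nlinarith

lemma sqrt_add_le' {a b : ℝ} (ha : 0 ≤ a) (hb : 0 ≤ b) :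
    Real.sqrt (a + b) ≤ Real.sqrt a + Real.sqrt b := by
  have h1 : 0 ≤ Real.sqrt a := Real.sqrt_nonneg a
  have h2 : 0 ≤ Real.sqrt b := Real.sqrt_nonneg b
  have h3 : a + b ≤ (Real.sqrt a + Real.sqrt b) ^ 2 := by
    have ea := Real.sq_sqrt ha
    have eb := Real.sq_sqrt hb
    nlinarith [mul_nonneg h1 h2]
  calc Real.sqrt (a + b) ≤ Real.sqrt ((Real.sqrt a + Real.sqrt b) ^ 2) := Real.sqrt_le_sqrt h3
    _ = Real.sqrt a + Real.sqrt b := Real.sqrt_sq (by linarith)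

lemma quad_bound {q L G : ℝ} (hq : 0 ≤ q) (hL : 0 ≤ L) (hG : 0 ≤ G)
    (h : q^2 ≤ 2*L*q + G) : q ≤ 2*L + Real.sqrt G := by
  by_contra hc
  push_neg at hc
  have h1 : Real.sqrt G * Real.sqrt G = G := Real.mul_self_sqrt hG
  have h2 : 0 ≤ Real.sqrt G := Real.sqrt_nonneg G
  nlinarith [mul_nonneg hL h2, mul_nonneg hL hq]

set_option maxHeartbeats 1200000 in
/-- deterministic bound on `‖P_T(A_r − B)‖_F`, second half of the
proof of Theorem 1: under hypotheses (i)–(iii) and `n ≥ 5`,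
`‖P_T(A_r − B)‖_F ≤ 4ε + (2mnλ/s)√(3r log(2n)) + 64 log(n)√(mnβ/(6s))‖P_{T⊥}(B)‖_F`. -/
theorem stmt8 (m n r s : ℕ) (hm : 0 < m) (hmn : m ≤ n) (hn5 : 5 ≤ n)
    (lam : ℝ) (hlam : 0 < lam) (ε : ℝ) (hε : 0 ≤ ε) (β : ℝ) (hβ : 1 < β)
    (U : Matrix (Fin m) (Fin r) ℝ) (V : Matrix (Fin n) (Fin r) ℝ)
    (hUo : Uᵀ * U = 1) (hVo : Vᵀ * V = 1)
    (Ω : Multiset (Fin m × Fin n)) (hcard : Ω.card = s)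
    (Ar : Matrix (Fin m) (Fin n) ℝ) (hArT : PT U V Ar = Ar)
    (B : Matrix (Fin m) (Fin n) ℝ)
    -- (i): the key inequality from Theorem 4
    (h1 : (1 / 2) * ip (RΩ Ω (Ar - B)) (Ar - B)
            + (lam / 2) * nuclearNorm (PTperp U V B)
          ≤ lam * Real.sqrt (r / (2 * n)) * fro (PT U V (Ar - B))
            + (2 * s * ε ^ 2 / (m * n)
                + 3 * m * n * r * Real.log (2 * n) * lam ^ 2 / (8 * s)))
    -- (ii): `(mn/s)·P_T∘R_Ω∘P_T − P_T` has Frobenius operator norm at most `1/2`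
    (h2 : ∀ Z : Matrix (Fin m) (Fin n) ℝ,
        fro (((m * n : ℝ) / s) • PT U V (RΩ Ω (PT U V Z)) - PT U V Z)
          ≤ (1 / 2) * fro Z)
    -- (iii): `R_Ω` has Frobenius operator norm at most `(8/3)·√β·log n`
    (h3 : ∀ Z : Matrix (Fin m) (Fin n) ℝ,
        fro (RΩ Ω Z) ≤ (8 / 3) * Real.sqrt β * Real.log n * fro Z) :
    fro (PT U V (Ar - B))
      ≤ 4 * ε + (2 * m * n * lam / s) * Real.sqrt (3 * r * Real.log (2 * n))
        + 64 * Real.log n * Real.sqrt (m * n * β / (6 * s)) * fro (PTperp U V B) := by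
  have hm' : (0:ℝ) < m := by exact_mod_cast hm
  have hn5' : (5:ℝ) ≤ n := by exact_mod_cast hn5
  have hn' : (0:ℝ) < n := by linarith
  have hr' : (0:ℝ) ≤ r := Nat.cast_nonneg r
  have hβ0 : (0:ℝ) ≤ β := by linarith
  have hsqβ : Real.sqrt β ≤ β := by
    calc Real.sqrt β ≤ Real.sqrt (β ^ 2) := Real.sqrt_le_sqrt (by nlinarith)
      _ = β := Real.sqrt_sq hβ0
  have hexp1 : Real.exp 1 < 2.7182818286 := Real.exp_one_lt_d9
  have hlogn : 1 ≤ Real.log n := by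
    rw [Real.le_log_iff_exp_le hn']
    linarith
  have hlog2n : 2 ≤ Real.log (2 * n) := by
    rw [Real.le_log_iff_exp_le (by linarith)]
    have : Real.exp 2 = Real.exp 1 * Real.exp 1 := by
      rw [← Real.exp_add]; norm_num
    nlinarith [Real.exp_pos 1]
  -- abbreviations
  set D := Ar - B with hD
  set Z0 := PT U V D with hZ0
  set x := fro Z0 with hx
  set b := fro (PTperp U V B) with hb
  have hx0 : 0 ≤ x := fro_nonneg _
  have hb0 : 0 ≤ b := fro_nonneg _
  have hidem : PT U V Z0 = Z0 := by
    rw [hZ0]; exact PT_idem U V hUo hVo D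
  -- case s = 0
  rcases Nat.eq_zero_or_pos s with hs0 | hs
  · subst hs0
    have h2' := h2 Z0
    rw [hidem] at h2'
    simp only [Nat.cast_zero, div_zero, zero_smul, zero_sub] at h2'
    rw [fro_neg] at h2'
    have hxz : x = 0 := by
      rw [← hx] at h2'
      linarith
    rw [hxz]
    simp only [Nat.cast_zero, mul_zero, div_zero, zero_mul, Real.sqrt_zero, add_zero, zero_add]
    linarith only [hε]
  -- main case s > 0
  have hs' : (0:ℝ) < s := by exact_mod_cast hs
  set E := D - Z0 with hE
  have hDE : D = Z0 + E := by rw [hE]; abel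
  have hEB : E = -(PTperp U V B) := by
    rw [hE, hZ0, hD, PT_sub, hArT, PTperp_eq]
    abel
  have froE : fro E = b := by rw [hEB, fro_neg]
  set Qa := ip (RΩ Ω Z0) Z0 with hQa
  set Qb := ip (RΩ Ω E) E with hQb
  have hQa0 : 0 ≤ Qa := ip_RΩ_self_nonneg Ω Z0
  have hQb0 : 0 ≤ Qb := ip_RΩ_self_nonneg Ω E
  set q := Real.sqrt Qa with hq
  have hq0 : 0 ≤ q := Real.sqrt_nonneg _
  have hqsq : q ^ 2 = Qa := Real.sq_sqrt hQa0
  -- Step A : x² ≤ (2mn/s)·Qa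
  set c : ℝ := (m * n : ℝ) / s with hc
  have hc0 : 0 < c := by
    rw [hc]; exact div_pos (mul_pos hm' hn') hs'
  have stepA : x ^ 2 ≤ 2 * c * Qa := by
    have h2' := h2 Z0
    rw [hidem] at h2'
    have hipw : ip (c • PT U V (RΩ Ω Z0) - Z0) Z0 = c * Qa - x ^ 2 := by
      rw [ip_sub_left, ip_smul_left, ip_PT_symm, hidem, ← hQa, ← fro_sq, ← hx]
    have h4 : -(fro (c • PT U V (RΩ Ω Z0) - Z0) * fro Z0) ≤ ip (c • PT U V (RΩ Ω Z0) - Z0) Z0 :=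
      neg_le_of_abs_le (abs_ip_le (c • PT U V (RΩ Ω Z0) - Z0) Z0)
    have h5 : fro (c • PT U V (RΩ Ω Z0) - Z0) * fro Z0 ≤ (1/2) * x * x := by
      have h6 := mul_le_mul_of_nonneg_right h2' (fro_nonneg Z0)
      rw [← hx] at h6
      linarith only [h6]
    rw [hipw, ← hx] at h4
    linarith only [h4, h5]
  -- x ≤ α q
  set α := Real.sqrt (2 * c) with hα
  have hα0 : 0 ≤ α := Real.sqrt_nonneg _
  have hαsq : α ^ 2 = 2 * c := Real.sq_sqrt (by linarith only [hc0])
  have hxq : x ≤ α * q := by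
    calc x = Real.sqrt (x ^ 2) := (Real.sqrt_sq hx0).symm
      _ ≤ Real.sqrt (2 * c * Qa) := Real.sqrt_le_sqrt stepA
      _ = α * q := by rw [Real.sqrt_mul (by linarith only [hc0] : (0:ℝ) ≤ 2 * c)]
  -- Step B : Qb ≤ Kb b²
  set Kb : ℝ := 8 / 3 * Real.sqrt β * Real.log n with hKb
  have hKb0 : 0 ≤ Kb := by
    rw [hKb]
    exact mul_nonneg (mul_nonneg (by norm_num) (Real.sqrt_nonneg β)) (by linarith only [hlogn])
  have stepB : Qb ≤ Kb * b ^ 2 := by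
    have h6 : Qb ≤ |ip (RΩ Ω E) E| := le_abs_self _
    have h7 := abs_ip_le (RΩ Ω E) E
    have h8 := h3 E
    rw [froE] at h8
    have h9 : fro (RΩ Ω E) * fro E ≤ (Kb * b) * b := by
      rw [froE]
      exact mul_le_mul_of_nonneg_right h8 hb0
    have hbb : b ^ 2 = b * b := sq b
    linarith only [h6, h7, h9, hbb]
  have hsqQb : Real.sqrt Qb ≤ Real.sqrt Kb * b := by
    calc Real.sqrt Qb ≤ Real.sqrt (Kb * b ^ 2) := Real.sqrt_le_sqrt stepB
      _ = Real.sqrt Kb * Real.sqrt (b ^ 2) := Real.sqrt_mul hKb0 _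
      _ = Real.sqrt Kb * b := by rw [Real.sqrt_sq hb0]
  -- Step C : the quadratic inequality
  have hnuc : 0 ≤ nuclearNorm (PTperp U V B) :=
    Finset.sum_nonneg fun j _ => Real.sqrt_nonneg _
  have hipD : ip (RΩ Ω D) D = Qa + 2 * ip (RΩ Ω Z0) E + Qb := by
    rw [hDE, RΩ_add, ip_add_left, ip_add_right, ip_add_right, ip_RΩ_comm Ω E Z0]
    ring
  have hcross : -(Real.sqrt Qa * Real.sqrt Qb) ≤ ip (RΩ Ω Z0) E := by
    have h10 := ip_RΩ_cs Ω Z0 E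
    have h11 : |ip (RΩ Ω Z0) E| ≤ Real.sqrt Qa * Real.sqrt Qb := by
      calc |ip (RΩ Ω Z0) E| = Real.sqrt ((ip (RΩ Ω Z0) E) ^ 2) := (Real.sqrt_sq_eq_abs _).symm
        _ ≤ Real.sqrt (Qa * Qb) := Real.sqrt_le_sqrt h10
        _ = Real.sqrt Qa * Real.sqrt Qb := Real.sqrt_mul hQa0 _
    exact neg_le_of_abs_le h11
  set G : ℝ := 2 * (2 * s * ε ^ 2 / (m * n) + 3 * m * n * r * Real.log (2 * n) * lam ^ 2 / (8 * s))
    with hG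
  have hG0 : 0 ≤ G := by
    rw [hG]
    have l0 : (0:ℝ) ≤ Real.log (2 * n) := by linarith only [hlog2n]
    have t1 : (0:ℝ) ≤ 2 * (s:ℝ) * ε ^ 2 / ((m:ℝ) * n) := by positivity
    have t2 : (0:ℝ) ≤ 3 * (m:ℝ) * n * r * Real.log (2 * n) * lam ^ 2 / (8 * s) :=
      div_nonneg (mul_nonneg (mul_nonneg (by positivity) l0) (sq_nonneg lam)) (by positivity)
    linarith only [t1, t2]
  set u := Real.sqrt ((r : ℝ) / (2 * n)) with hu
  have hu0 : 0 ≤ u := Real.sqrt_nonneg _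
  set L : ℝ := Real.sqrt Qb + lam * u * α with hL
  have hL0 : 0 ≤ L := by
    rw [hL]
    exact add_nonneg (Real.sqrt_nonneg _) (mul_nonneg (mul_nonneg hlam.le hu0) hα0)
  have hquad : q ^ 2 ≤ 2 * L * q + G := by
    have hnn : 0 ≤ lam / 2 * nuclearNorm (PTperp U V B) := mul_nonneg (by linarith) hnuc
    have c2 : ip (RΩ Ω D) D ≤ 2 * (lam * u * x) + G := by
      linarith only [h1, hnn, hG]
    have c4 : lam * u * x ≤ lam * u * (α * q) :=
      mul_le_mul_of_nonneg_left hxq (mul_nonneg hlam.le hu0)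
    have c3 : -(q * Real.sqrt Qb) ≤ ip (RΩ Ω Z0) E := by
      rw [hq]
      linarith only [hcross]
    rw [hL, hqsq]
    linarith only [hipD, c2, c3, c4, hQb0]
  have hqle : q ≤ 2 * L + Real.sqrt G := quad_bound hq0 hL0 hG0 hquad
  -- assemble
  have hxle : x ≤ 2 * α * Real.sqrt Qb + 2 * α ^ 2 * lam * u + α * Real.sqrt G := by
    have := mul_le_mul_of_nonneg_left hqle hα0
    calc x ≤ α * q := hxq
      _ ≤ α * (2 * L + Real.sqrt G) := this
      _ = 2 * α * Real.sqrt Qb + 2 * α ^ 2 * lam * u + α * Real.sqrt G := by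
          rw [hL]; ring
  -- split G
  set G1 : ℝ := 4 * s * ε ^ 2 / (m * n) with hG1
  set G2 : ℝ := 3 * m * n * r * Real.log (2 * n) * lam ^ 2 / (4 * s) with hG2
  have hG10 : 0 ≤ G1 := by positivity
  have hG20 : 0 ≤ G2 := by
    rw [hG2]
    exact div_nonneg (mul_nonneg (mul_nonneg (by positivity) (by linarith only [hlog2n]))
      (sq_nonneg lam)) (by positivity)
  have hmn0 : ((m:ℝ) * n) ≠ 0 := ne_of_gt (mul_pos hm' hn')
  have hs0' : (s:ℝ) ≠ 0 := ne_of_gt hs'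
  have hGsplit : G = G1 + G2 := by
    rw [hG, hG1, hG2]; field_simp; ring
  have hsqrtG : Real.sqrt G ≤ Real.sqrt G1 + Real.sqrt G2 := by
    rw [hGsplit]; exact sqrt_add_le' hG10 hG20
  -- (D3) : α √G1 ≤ 4 ε
  have hD3 : α * Real.sqrt G1 ≤ 4 * ε := by
    rw [hα, ← Real.sqrt_mul (by positivity : (0:ℝ) ≤ 2 * c)]
    have he : 2 * c * G1 = 8 * ε ^ 2 := by
      rw [hc, hG1]; field_simp; ring
    rw [he]
    calc Real.sqrt (8 * ε ^ 2) ≤ Real.sqrt ((4 * ε) ^ 2) :=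
          Real.sqrt_le_sqrt (by linarith only [sq_nonneg ε])
      _ = 4 * ε := Real.sqrt_sq (by linarith)
  -- (D2)
  set T : ℝ := m * n * lam / s with hT
  have hT0 : 0 < T := by
    rw [hT]; exact div_pos (mul_pos (mul_pos hm' hn') hlam) hs'
  set v := Real.sqrt (3 * r * Real.log (2 * n)) with hv
  have hv0 : 0 ≤ v := Real.sqrt_nonneg _
  have husq : u ^ 2 = (r : ℝ) / (2 * n) := Real.sq_sqrt (by positivity)
  have hvsq : v ^ 2 = 3 * r * Real.log (2 * n) :=
    Real.sq_sqrt (mul_nonneg (by positivity) (by linarith only [hlog2n]))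
  have hD2a : 2 * α ^ 2 * lam * u ≤ (5/4) * T * v := by
    have key : (2 * α ^ 2 * lam * u) ^ 2 ≤ ((5/4) * T * v) ^ 2 := by
      have e1 : (2 * α ^ 2 * lam * u) ^ 2 = 16 * T ^ 2 * u ^ 2 := by
        rw [hαsq, hc, hT]; field_simp; ring
      have e2 : ((5/4) * T * v) ^ 2 = (25/16) * T ^ 2 * v ^ 2 := by ring
      rw [e1, e2, husq, hvsq]
      have hrd : (r : ℝ) / (2 * n) ≤ (r : ℝ) / 10 := by
        apply div_le_div_of_nonneg_left hr' (by norm_num) (by linarith)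
      have k1 : 16 * T ^ 2 * ((r:ℝ) / (2 * n)) ≤ 16 * T ^ 2 * ((r:ℝ) / 10) :=
        mul_le_mul_of_nonneg_left hrd (by positivity)
      have k2 : 0 ≤ (r:ℝ) * T ^ 2 := mul_nonneg hr' (sq_nonneg T)
      have k3 : 0 ≤ ((r:ℝ) * T ^ 2) * (Real.log (2 * n) - 2) :=
        mul_nonneg k2 (by linarith)
      linarith only [k1, k2, k3]
    exact le_of_sq_le'
      (mul_nonneg (mul_nonneg (mul_nonneg (by norm_num) (sq_nonneg α)) hlam.le) hu0)
      (mul_nonneg (mul_nonneg (by norm_num) hT0.le) hv0) key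
  have hD2b : α * Real.sqrt G2 ≤ (3/4) * T * v := by
    have key : (α * Real.sqrt G2) ^ 2 ≤ ((3/4) * T * v) ^ 2 := by
      have e1 : (α * Real.sqrt G2) ^ 2 = α ^ 2 * G2 := by
        rw [mul_pow, Real.sq_sqrt hG20]
      have e2 : α ^ 2 * G2 = (3/2) * T ^ 2 * ((r:ℝ) * Real.log (2 * n)) := by
        rw [hαsq, hc, hG2, hT]; field_simp; ring
      have e3 : ((3/4) * T * v) ^ 2 = (9/16) * T ^ 2 * (3 * (r:ℝ) * Real.log (2 * n)) := by
        rw [mul_pow, mul_pow, hvsq]; ring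
      rw [e1, e2, e3]
      have k2 : 0 ≤ ((r:ℝ) * Real.log (2 * n)) * T ^ 2 :=
        mul_nonneg (mul_nonneg hr' (by linarith)) (sq_nonneg T)
      linarith only [k2]
    exact le_of_sq_le' (mul_nonneg hα0 (Real.sqrt_nonneg _))
      (mul_nonneg (mul_nonneg (by norm_num) hT0.le) hv0) key
  have hD2 : 2 * α ^ 2 * lam * u + α * Real.sqrt G2 ≤ 2 * T * v := by
    have := hD2a
    have := hD2b
    linarith
  -- (D1)
  have hD1 : 2 * α * Real.sqrt Qb ≤ 64 * Real.log n * Real.sqrt ((m:ℝ) * n * β / (6 * s)) * b := by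
    have step1 : 2 * α * Real.sqrt Qb ≤ 2 * α * (Real.sqrt Kb * b) :=
      mul_le_mul_of_nonneg_left hsqQb (by linarith only [hα0])
    have coeff : 2 * α * Real.sqrt Kb ≤ 64 * Real.log n * Real.sqrt ((m:ℝ) * n * β / (6 * s)) := by
      have key : (2 * α * Real.sqrt Kb) ^ 2 ≤
          (64 * Real.log n * Real.sqrt ((m:ℝ) * n * β / (6 * s))) ^ 2 := by
        have e1 : (2 * α * Real.sqrt Kb) ^ 2 = 4 * (2 * c) * Kb := by
          rw [mul_pow, mul_pow, hαsq, Real.sq_sqrt hKb0]; ring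
        have e2 : (64 * Real.log n * Real.sqrt ((m:ℝ) * n * β / (6 * s))) ^ 2
            = 4096 * (Real.log n) ^ 2 * ((m:ℝ) * n * β / (6 * s)) := by
          rw [mul_pow, mul_pow, Real.sq_sqrt (div_nonneg (mul_nonneg (by positivity) hβ0)
            (by positivity) : (0:ℝ) ≤ (m:ℝ) * n * β / (6 * s))]
          ring
        rw [e1, e2, hKb, hc]
        have hw : (0:ℝ) < (m:ℝ) * n / s := div_pos (mul_pos hm' hn') hs'
        have s1 : Real.sqrt β * Real.log n ≤ β * (Real.log n) ^ 2 := by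
          have p1 : 0 ≤ (β - Real.sqrt β) * Real.log n :=
            mul_nonneg (by linarith) (by linarith)
          have p2 : 0 ≤ (β * Real.log n) * (Real.log n - 1) :=
            mul_nonneg (mul_nonneg hβ0 (by linarith)) (by linarith)
          linarith only [p1, p2]
        have s2 : ((m:ℝ) * n / s) * (Real.sqrt β * Real.log n) ≤
            ((m:ℝ) * n / s) * (β * (Real.log n) ^ 2) :=
          mul_le_mul_of_nonneg_left s1 (le_of_lt hw)
        have e3 : 4 * (2 * ((m:ℝ) * n / s)) * (8 / 3 * Real.sqrt β * Real.log n)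
            = (64/3) * (((m:ℝ) * n / s) * (Real.sqrt β * Real.log n)) := by ring
        have e4 : 4096 * (Real.log n) ^ 2 * ((m:ℝ) * n * β / (6 * s))
            = (4096/6) * (((m:ℝ) * n / s) * (β * (Real.log n) ^ 2)) := by
          field_simp
        rw [e3, e4]
        have pos1 : 0 ≤ ((m:ℝ) * n / s) * (β * (Real.log n) ^ 2) :=
          mul_nonneg hw.le (mul_nonneg hβ0 (sq_nonneg _))
        linarith only [s2, pos1]
      exact le_of_sq_le'
        (mul_nonneg (mul_nonneg (by norm_num) hα0) (Real.sqrt_nonneg _))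
        (mul_nonneg (mul_nonneg (by norm_num) (by linarith only [hlogn])) (Real.sqrt_nonneg _))
        key
    calc 2 * α * Real.sqrt Qb ≤ 2 * α * (Real.sqrt Kb * b) := step1
      _ = (2 * α * Real.sqrt Kb) * b := by ring
      _ ≤ 64 * Real.log n * Real.sqrt ((m:ℝ) * n * β / (6 * s)) * b :=
          mul_le_mul_of_nonneg_right coeff hb0
  -- final combination
  have hfinal : x ≤ 4 * ε + 2 * T * v
      + 64 * Real.log n * Real.sqrt ((m:ℝ) * n * β / (6 * s)) * b := by
    have hαG : α * Real.sqrt G ≤ α * Real.sqrt G1 + α * Real.sqrt G2 := by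
      have := mul_le_mul_of_nonneg_left hsqrtG hα0
      linarith [this]
    calc x ≤ 2 * α * Real.sqrt Qb + 2 * α ^ 2 * lam * u + α * Real.sqrt G := hxle
      _ ≤ 2 * α * Real.sqrt Qb + 2 * α ^ 2 * lam * u + (α * Real.sqrt G1 + α * Real.sqrt G2) := by
          linarith only [hαG]
      _ ≤ 4 * ε + 2 * T * v
          + 64 * Real.log n * Real.sqrt ((m:ℝ) * n * β / (6 * s)) * b := by
          linarith only [hD1, hD2, hD3]
  have hTT : 2 * T * v = 2 * (m:ℝ) * n * lam / s * Real.sqrt (3 * r * Real.log (2 * n)) := by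
    rw [hT, hv]; ring
  linarith only [hfinal, hTT]

end MC
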